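/- Let T : X^n → ℤ have sensitivity 1 (|T(X) − T(X')| ≤ 1 for all X, X' at Hamming distance 1). Then the family of distributions {Tulap(T(X), b = e^{−ε}, q = 2δb/(1 − b + 2δb)) : X ∈ X^n} satisfies (ε, δ)-differential privacy. -/

import Mathlib

open MeasureTheory Real Set

/-- cdf of `Tulap(0,b,0)`, the distribution of `DLap(b) + Unif(-1/2,1/2)`. -/
noncomputable def tulapCdf0 (b : ℝ) (x : ℝ) : ℝ :=
  if x ≤ 0 then b ^ (-(round x)) / (1 + b) * (b + (x - round x + 1/2) * (1 - b))
  else 1 - b ^ (round x) / (1 + b) * (b + ((round x : ℝ) - x + 1/2) * (1 - b))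

/-- Density of `Tulap(0,b,q)`: the density of `DLap(b) + Unif(-1/2,1/2)`, truncated to
the central `1-q` probability mass and renormalized. -/
noncomputable def tulapDensity (b q : ℝ) (x : ℝ) : ℝ :=
  if q/2 ≤ tulapCdf0 b x ∧ tulapCdf0 b x ≤ 1 - q/2 then
    (1 - b) / (1 + b) * b ^ (round x).natAbs / (1 - q)
  else 0

/-- The `Tulap(m,b,q)` distribution as a measure on ℝ. -/
noncomputable def tulapMeasure (m b q : ℝ) : Measure ℝ :=
  MeasureTheory.volume.withDensity (fun x => ENNReal.ofReal (tulapDensity b q (x - m)))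

namespace TulapAux

noncomputable def tdens (b : ℝ) (x : ℝ) : ℝ := (1-b)/(1+b) * b ^ (round x).natAbs

lemma measurable_round' : Measurable (fun x : ℝ => round x) := by
  simp only [round_eq]
  exact Int.measurable_floor.comp (measurable_add_const _)

lemma measurable_tdens {b : ℝ} : Measurable (tdens b) := by
  unfold tdens
  exact (measurable_from_top (f := fun r : ℤ => (1-b)/(1+b) * b ^ r.natAbs)).comp
    measurable_round'

lemma tdens_nonneg {b : ℝ} (hb0 : 0 < b) (hb1 : b < 1) (x : ℝ) : 0 ≤ tdens b x := by
  unfold tdens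
  have h1 : (0:ℝ) ≤ (1-b)/(1+b) := by
    apply div_nonneg <;> linarith
  exact mul_nonneg h1 (pow_nonneg hb0.le _)

lemma tdens_le_one {b : ℝ} (hb0 : 0 < b) (hb1 : b < 1) (x : ℝ) : tdens b x ≤ 1 := by
  unfold tdens
  have h1 : b ^ (round x).natAbs ≤ 1 := pow_le_one₀ hb0.le hb1.le
  have h2 : (1-b)/(1+b) ≤ 1 := by
    rw [div_le_one (by linarith)]; linarith
  have h3 : (0:ℝ) ≤ (1-b)/(1+b) := by
    apply div_nonneg <;> linarith
  nlinarith

lemma round_bounds (x : ℝ) : (round x : ℝ) - 1/2 ≤ x ∧ x < round x + 1/2 := by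
  rw [round_eq]
  constructor
  · have := Int.floor_le (x + 1/2); linarith
  · have := Int.lt_floor_add_one (x + 1/2); push_cast at this; linarith

lemma round_eq_of {x : ℝ} {n : ℤ} (h1 : (n:ℝ) - 1/2 ≤ x) (h2 : x < n + 1/2) :
    round x = n := by
  rw [round_eq, Int.floor_eq_iff]
  constructor <;> push_cast <;> linarith

lemma round_nonpos {x : ℝ} (hx : x ≤ 0) : round x ≤ 0 := by
  have := (round_bounds x).1
  by_contra h
  push_neg at h
  have : (1:ℝ) ≤ round x := by exact_mod_cast h
  linarith

lemma round_nonneg {x : ℝ} (hx : 0 < x) : 0 ≤ round x := by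
  have := (round_bounds x).2
  by_contra h
  push_neg at h
  have : (round x : ℝ) ≤ -1 := by exact_mod_cast Int.le_of_lt_add_one (by exact_mod_cast h)
  linarith

lemma zpow_neg_natAbs {b : ℝ} {r : ℤ} (hr : r ≤ 0) : b ^ (-r) = b ^ r.natAbs := by
  rw [← zpow_natCast]
  congr 1
  omega

lemma zpow_natAbs {b : ℝ} {r : ℤ} (hr : 0 ≤ r) : b ^ r = b ^ r.natAbs := by
  rw [← zpow_natCast]
  congr 1
  omega

lemma cdf_right_linear {b : ℝ} (hb0 : 0 < b) (x : ℝ) : ∃ η > 0, ∀ y ∈ Ico x (x+η),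
    tulapCdf0 b y = tulapCdf0 b x + tdens b x * (y - x) := by
  obtain ⟨hxl, hxr⟩ := round_bounds x
  have h1b : (0:ℝ) < 1 + b := by linarith
  rcases lt_trichotomy x 0 with hx | hx | hx
  · refine ⟨min ((round x : ℝ) + 1/2 - x) (-x), lt_min (by linarith) (by linarith), ?_⟩
    rintro y ⟨hy1, hy2⟩
    have hy2' : y < (round x : ℝ) + 1/2 := by
      have := min_le_left ((round x : ℝ) + 1/2 - x) (-x); linarith
    have hy0 : y < 0 := by
      have := min_le_right ((round x : ℝ) + 1/2 - x) (-x); linarith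
    have hyr : round y = round x := round_eq_of (by linarith) hy2'
    have hrle : round x ≤ 0 := round_nonpos hx.le
    unfold tulapCdf0 tdens
    rw [if_pos hy0.le, if_pos hx.le, hyr, ← zpow_neg_natAbs hrle]
    generalize b ^ (-(round x)) = A
    field_simp
    ring
  · subst hx
    refine ⟨1/2, by norm_num, ?_⟩
    rintro y ⟨hy1, hy2⟩
    rcases eq_or_lt_of_le hy1 with rfl | hy0
    · simp
    · have hyr : round y = 0 := round_eq_of (by norm_num; linarith) (by push_cast; linarith)
      have hr0 : round (0:ℝ) = 0 := by simp
      unfold tulapCdf0 tdens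
      rw [if_neg (by linarith), if_pos le_rfl, hyr, hr0]
      norm_num
      field_simp
      ring
  · refine ⟨(round x : ℝ) + 1/2 - x, by linarith, ?_⟩
    rintro y ⟨hy1, hy2⟩
    have hy0 : 0 < y := by linarith
    have hyr : round y = round x := round_eq_of (by linarith) (by linarith)
    have hrge : 0 ≤ round x := round_nonneg hx
    unfold tulapCdf0 tdens
    rw [if_neg (by linarith), if_neg (by linarith), hyr, ← zpow_natAbs hrge]
    generalize b ^ (round x : ℤ) = A
    field_simp
    ring

lemma cdf_left_linear {b : ℝ} (hb0 : 0 < b) (x : ℝ) : ∃ η > 0, ∃ B : ℝ, ∀ y ∈ Ioc (x-η) x,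
    tulapCdf0 b y = tulapCdf0 b x + B * (y - x) := by
  obtain ⟨hxl, hxr⟩ := round_bounds x
  have h1b : (0:ℝ) < 1 + b := by linarith
  rcases eq_or_lt_of_le hxl with heq | hlt
  · -- x = round x - 1/2 : boundary case
    rcases le_or_gt x 0 with hx0 | hx0
    · -- left branch; round y = round x - 1 for y < x
      have hrle : round x ≤ 0 := round_nonpos hx0
      refine ⟨1, one_pos, b ^ (-(round x - 1)) * ((1-b)/(1+b)), ?_⟩
      rintro y ⟨hy1, hy2⟩
      rcases eq_or_lt_of_le hy2 with rfl | hyx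
      · simp
      · have hyr : round y = round x - 1 := round_eq_of (by push_cast; linarith) (by push_cast; linarith)
        have hy0 : y ≤ 0 := by linarith
        obtain ⟨R, hR⟩ : ∃ R : ℤ, round x = R := ⟨_, rfl⟩
        have hA : b ^ (-R) = b ^ (-(R - 1)) * b⁻¹ := by
          rw [show -R = (-(R - 1)) + (-1) by ring, zpow_add₀ hb0.ne', zpow_neg_one]
        rw [hR] at heq
        unfold tulapCdf0
        rw [if_pos hy0, if_pos hx0, hyr, hR, hA]
        generalize b ^ (-(R - 1)) = A
        push_cast
        rw [← heq]
        field_simp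
        ring
    · -- right branch; round x ≥ 1
      have hrge : 0 ≤ round x := round_nonneg hx0
      have hr1 : 1 ≤ round x := by
        by_contra h
        push_neg at h
        have h0 : round x = 0 := by omega
        rw [h0] at heq
        norm_num at heq
        linarith
      refine ⟨min 1 x, lt_min one_pos hx0, b ^ (round x - 1) * ((1-b)/(1+b)), ?_⟩
      rintro y ⟨hy1, hy2⟩
      have hy1' : x - 1 < y := by
        have := min_le_left (1:ℝ) x; linarith
      have hy0 : 0 < y := by
        have := min_le_right (1:ℝ) x; linarith
      rcases eq_or_lt_of_le hy2 with rfl | hyx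
      · simp
      · have hyr : round y = round x - 1 := round_eq_of (by push_cast; linarith) (by push_cast; linarith)
        obtain ⟨R, hR⟩ : ∃ R : ℤ, round x = R := ⟨_, rfl⟩
        have hA : b ^ R = b ^ (R - 1) * b := by
          rw [show R = (R - 1) + 1 by ring, zpow_add₀ hb0.ne', zpow_one]
          congr 2
          omega
        rw [hR] at heq
        unfold tulapCdf0
        rw [if_neg (by linarith), if_neg (by linarith), hyr, hR, hA]
        generalize b ^ (R - 1) = A
        push_cast
        rw [← heq]
        field_simp
        ring
  · -- interior: round y = round x near x
    rcases le_or_gt x 0 with hx0 | hx0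
    · refine ⟨x - ((round x : ℝ) - 1/2), by linarith, b ^ (-(round x)) * ((1-b)/(1+b)), ?_⟩
      rintro y ⟨hy1, hy2⟩
      have hy0 : y ≤ 0 := by linarith
      have hyr : round y = round x := round_eq_of (by linarith) (by linarith)
      unfold tulapCdf0
      rw [if_pos hy0, if_pos hx0, hyr]
      generalize b ^ (-(round x)) = A
      field_simp
      ring
    · refine ⟨min (x - ((round x : ℝ) - 1/2)) x, lt_min (by linarith) hx0,
        b ^ (round x) * ((1-b)/(1+b)), ?_⟩
      rintro y ⟨hy1, hy2⟩
      have hy1' : (round x : ℝ) - 1/2 < y := by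
        have := min_le_left (x - ((round x : ℝ) - 1/2)) x; linarith
      have hy0 : 0 < y := by
        have := min_le_right (x - ((round x : ℝ) - 1/2)) x; linarith
      have hyr : round y = round x := round_eq_of (by linarith) (by linarith)
      unfold tulapCdf0
      rw [if_neg (by linarith), if_neg (by linarith), hyr]
      generalize b ^ (round x : ℤ) = A
      field_simp
      ring

lemma cdf_continuous {b : ℝ} (hb0 : 0 < b) : Continuous (tulapCdf0 b) := by
  rw [continuous_iff_continuousAt]
  intro x
  obtain ⟨η1, hη1, hlin1⟩ := cdf_right_linear hb0 x
  obtain ⟨η2, hη2, B, hlin2⟩ := cdf_left_linear hb0 x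
  have hg : ∀ (c : ℝ), ContinuousAt (fun y => tulapCdf0 b x + c * (y - x)) x := by
    intro c; fun_prop
  have h1 : ContinuousWithinAt (tulapCdf0 b) (Ioc (x-η2) x) x :=
    ((hg B).continuousWithinAt).congr (fun y hy => hlin2 y hy) (by simp)
  have h2 : ContinuousWithinAt (tulapCdf0 b) (Ico x (x+η1)) x :=
    ((hg (tdens b x)).continuousWithinAt).congr (fun y hy => hlin1 y hy) (by simp)
  exact (h1.union h2).continuousAt (Filter.mem_of_superset
    (Ioo_mem_nhds (a := x - η2) (b := x + η1) (by linarith) (by linarith))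
    (fun y hy => by
      rcases le_or_gt y x with h | h
      · exact Or.inl ⟨hy.1, h⟩
      · exact Or.inr ⟨h.le, hy.2⟩))

lemma cdf_hasDerivRight {b : ℝ} (hb0 : 0 < b) (x : ℝ) :
    HasDerivWithinAt (tulapCdf0 b) (tdens b x) (Ioi x) x := by
  obtain ⟨η, hη, hlin⟩ := cdf_right_linear hb0 x
  have h1 : HasDerivWithinAt (fun y => tulapCdf0 b x + tdens b x * (y - x))
      (tdens b x) (Ioi x) x := by
    have : HasDerivAt (fun y => tulapCdf0 b x + tdens b x * (y - x)) (tdens b x) x := by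
      simpa using (((hasDerivAt_id x).sub_const x).const_mul (tdens b x)).const_add
        (tulapCdf0 b x)
    exact this.hasDerivWithinAt
  refine h1.congr_of_eventuallyEq ?_ (by simp)
  filter_upwards [Ioo_mem_nhdsGT_of_mem (show x ∈ Ico x (x+η) from ⟨le_rfl, by linarith⟩)]
    with y hy
  exact hlin y ⟨hy.1.le, hy.2⟩

lemma cdf_pos {b : ℝ} (hb0 : 0 < b) (hb1 : b < 1) (x : ℝ) : 0 < tulapCdf0 b x := by
  obtain ⟨hxl, hxr⟩ := round_bounds x
  have h1b : (0:ℝ) < 1 + b := by linarith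
  unfold tulapCdf0
  split_ifs with h
  · have hr : round x ≤ 0 := round_nonpos h
    have h1 : 0 < b ^ (-(round x)) := zpow_pos hb0 _
    have h3 : 0 ≤ x - round x + 1/2 := by linarith
    have h4 : 0 < b + (x - round x + 1/2) * (1-b) := by nlinarith
    positivity
  · push_neg at h
    have hr : 0 ≤ round x := round_nonneg h
    rw [zpow_natAbs hr]
    have h1 : b ^ (round x).natAbs ≤ 1 := pow_le_one₀ hb0.le hb1.le
    have h0 : 0 < b ^ (round x).natAbs := pow_pos hb0 _
    have hu1 : (round x : ℝ) - x + 1/2 ≤ 1 := by linarith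
    have hu0 : 0 ≤ (round x : ℝ) - x + 1/2 := by linarith
    have h4 : b + ((round x : ℝ) - x + 1/2) * (1-b) ≤ 1 := by nlinarith
    have h5 : 0 ≤ b + ((round x : ℝ) - x + 1/2) * (1-b) := by nlinarith
    have h8 : b ^ (round x).natAbs * (b + ((round x : ℝ) - x + 1/2) * (1-b)) ≤ 1 := by
      nlinarith [mul_le_mul h1 h4 h5 (by norm_num : (0:ℝ) ≤ 1)]
    have h6 : b ^ (round x).natAbs / (1+b) * (b + ((round x : ℝ) - x + 1/2) * (1-b)) ≤ 1 / (1+b) := by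
      rw [div_mul_eq_mul_div, div_le_div_iff₀ h1b h1b]
      nlinarith
    have h7 : 1 / (1+b) < 1 := by
      rw [div_lt_one h1b]; linarith
    linarith

lemma cdf_lt_one {b : ℝ} (hb0 : 0 < b) (hb1 : b < 1) (x : ℝ) : tulapCdf0 b x < 1 := by
  obtain ⟨hxl, hxr⟩ := round_bounds x
  have h1b : (0:ℝ) < 1 + b := by linarith
  unfold tulapCdf0
  split_ifs with h
  · have hr : round x ≤ 0 := round_nonpos h
    rw [zpow_neg_natAbs hr]
    have h1 : b ^ (round x).natAbs ≤ 1 := pow_le_one₀ hb0.le hb1.le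
    have h0 : 0 < b ^ (round x).natAbs := pow_pos hb0 _
    have hu1 : x - (round x : ℝ) + 1/2 < 1 := by linarith
    have hu0 : 0 ≤ x - (round x : ℝ) + 1/2 := by linarith
    have h4 : b + (x - (round x : ℝ) + 1/2) * (1-b) < 1 := by nlinarith
    have h5 : 0 < b + (x - (round x : ℝ) + 1/2) * (1-b) := by nlinarith
    have h8 : b ^ (round x).natAbs * (b + (x - (round x : ℝ) + 1/2) * (1-b)) < 1 := by
      nlinarith [mul_le_mul h1 h4.le h5.le (by norm_num : (0:ℝ) ≤ 1)]
    have h6 : b ^ (round x).natAbs / (1+b) * (b + (x - (round x : ℝ) + 1/2) * (1-b)) < 1 / (1+b) := by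
      rw [div_mul_eq_mul_div, div_lt_div_iff₀ h1b h1b]
      nlinarith
    have h7 : 1 / (1+b) < 1 := by
      rw [div_lt_one h1b]; linarith
    linarith
  · push_neg at h
    have hr : 0 ≤ round x := round_nonneg h
    have h1 : 0 < b ^ (round x) := zpow_pos hb0 _
    have hu0 : 0 < (round x : ℝ) - x + 1/2 := by linarith
    have h4 : 0 < b + ((round x : ℝ) - x + 1/2) * (1-b) := by nlinarith
    have : 0 < b ^ (round x) / (1+b) * (b + ((round x : ℝ) - x + 1/2) * (1-b)) := by positivity
    linarith

lemma cdf_rec_left {b : ℝ} (hb0 : 0 < b) (hb1 : b < 1) (t : ℝ) :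
    tulapCdf0 b (t+1) ≤ tulapCdf0 b t / b := by
  obtain ⟨htl, htr⟩ := round_bounds t
  have h1b : (0:ℝ) < 1 + b := by linarith
  have hrt1 : round (t+1) = round t + 1 := by
    have := round_add_intCast t 1
    push_cast at this
    exact_mod_cast this
  rcases le_or_gt (t+1) 0 with h1 | h1
  · have ht0 : t ≤ 0 := by linarith
    unfold tulapCdf0
    rw [if_pos h1, if_pos ht0, hrt1]
    have hA : b ^ (-(round t + 1)) = b ^ (-(round t)) / b := by
      rw [show -(round t + 1) = -(round t) - 1 by ring, zpow_sub₀ hb0.ne', zpow_one]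
    rw [hA]
    apply le_of_eq
    obtain ⟨R, hR⟩ : ∃ R : ℤ, round t = R := ⟨_, rfl⟩
    rw [hR]
    push_cast
    ring
  · rcases le_or_gt t 0 with ht0 | ht0
    · have hrge : -1 ≤ round t := by
        by_contra h
        push_neg at h
        have h2 : round t ≤ -2 := by omega
        have : (round t : ℝ) ≤ -2 := by exact_mod_cast h2
        linarith
      have hrle : round t ≤ 0 := round_nonpos ht0
      unfold tulapCdf0
      rw [if_neg (by linarith), if_pos ht0, hrt1]
      have : round t = -1 ∨ round t = 0 := by omega
      rcases this with h' | h'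
      · rw [h'] at htl htr ⊢
        apply le_of_eq
        norm_num
        field_simp
        ring
      · rw [h'] at htl htr ⊢
        norm_num
        rw [← sub_nonneg, ← mul_nonneg_iff_of_pos_right (show (0:ℝ) < b*(1+b) by positivity)]
        have hE : ((1 + b)⁻¹ * (b + (t + 1 / 2) * (1 - b)) / b + b / (1 + b) * (b + (-t + 1 / 2) * (1 - b)) - 1) * (b * (1+b))
            = (t + 1/2) * (1-b) * (1 - b^2) := by
          field_simp
          ring
        rw [hE]
        have ht' : (0:ℝ) ≤ t + 1/2 := by
          have : ((0:ℤ):ℝ) = 0 := by norm_num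
          rw [this] at htl
          linarith
        have hb2 : (0:ℝ) ≤ 1 - b^2 := by nlinarith
        have := mul_nonneg (mul_nonneg ht' (by linarith : (0:ℝ) ≤ 1 - b)) hb2
        linarith
    · have hrge : 0 ≤ round t := round_nonneg ht0
      unfold tulapCdf0
      rw [if_neg (by linarith), if_neg (by linarith), hrt1]
      have hA : b ^ (round t + 1) = b ^ (round t) * b := by
        rw [zpow_add_one₀ hb0.ne']
      rw [hA, zpow_natAbs hrge]
      obtain ⟨R, hR⟩ : ∃ R : ℤ, round t = R := ⟨_, rfl⟩
      rw [hR] at htl htr ⊢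
      generalize hP : b ^ R.natAbs = P
      have hP1 : P ≤ 1 := by rw [← hP]; exact pow_le_one₀ hb0.le hb1.le
      have hP0 : 0 < P := by rw [← hP]; exact pow_pos hb0 _
      rw [le_div_iff₀ hb0, ← sub_nonneg, ← mul_nonneg_iff_of_pos_right h1b]
      have hE : (1 - P / (1 + b) * (b + (↑R - t + 1 / 2) * (1 - b)) -
          (1 - P * b / (1 + b) * (b + (↑(R + 1) - (t + 1) + 1 / 2) * (1 - b))) * b) * (1 + b)
          = (1-b)*(1+b)*(1 - P * (b + ((R:ℝ) - t + 1/2) * (1-b))) := by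
        push_cast
        field_simp
        ring
      rw [hE]
      have hu0 : (0:ℝ) ≤ (R:ℝ) - t + 1/2 := by linarith
      have hu1 : (R:ℝ) - t + 1/2 ≤ 1 := by linarith
      have hA0 : (0:ℝ) ≤ b + ((R:ℝ) - t + 1/2) * (1-b) := by
        have := mul_nonneg hu0 (by linarith : (0:ℝ) ≤ 1-b)
        linarith
      have hA1 : b + ((R:ℝ) - t + 1/2) * (1-b) ≤ 1 := by
        have := mul_le_mul_of_nonneg_right hu1 (by linarith : (0:ℝ) ≤ 1-b)
        linarith
      have hPA : P * (b + ((R:ℝ) - t + 1/2) * (1-b)) ≤ 1 := by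
        have := mul_le_mul hP1 hA1 hA0 (by norm_num : (0:ℝ) ≤ 1)
        linarith
      exact mul_nonneg (mul_nonneg (by linarith : (0:ℝ) ≤ 1-b) (by linarith : (0:ℝ) ≤ 1+b)) (by linarith : (0:ℝ) ≤ 1 - P * (b + ((R:ℝ) - t + 1/2) * (1-b)))

lemma cdf_rec_right {b : ℝ} (hb0 : 0 < b) (hb1 : b < 1) (t : ℝ) :
    1 - tulapCdf0 b (t-1) ≤ (1 - tulapCdf0 b t) / b := by
  obtain ⟨htl, htr⟩ := round_bounds t
  have h1b : (0:ℝ) < 1 + b := by linarith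
  have hrt1 : round (t-1) = round t - 1 := by
    have := round_sub_intCast t 1
    push_cast at this
    exact_mod_cast this
  rcases le_or_gt t 0 with h1 | h1
  · have ht0 : t - 1 ≤ 0 := by linarith
    have hrle : round t ≤ 0 := round_nonpos h1
    unfold tulapCdf0
    rw [if_pos ht0, if_pos h1, hrt1]
    have hA : b ^ (-(round t - 1)) = b ^ (-(round t)) * b := by
      rw [show -(round t - 1) = -(round t) + 1 by ring, zpow_add_one₀ hb0.ne']
    rw [hA, zpow_neg_natAbs hrle]
    obtain ⟨R, hR⟩ : ∃ R : ℤ, round t = R := ⟨_, rfl⟩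
    rw [hR] at htl htr ⊢
    generalize hP : b ^ R.natAbs = P
    have hP1 : P ≤ 1 := by rw [← hP]; exact pow_le_one₀ hb0.le hb1.le
    have hP0 : 0 < P := by rw [← hP]; exact pow_pos hb0 _
    rw [le_div_iff₀ hb0, ← sub_nonneg, ← mul_nonneg_iff_of_pos_right h1b]
    have hE : (1 - P / (1 + b) * (b + (t - ↑R + 1 / 2) * (1 - b)) -
        (1 - P * b / (1 + b) * (b + (t - 1 - ↑(R - 1) + 1 / 2) * (1 - b))) * b) * (1 + b)
        = (1-b)*(1+b)*(1 - P * (b + (t - (R:ℝ) + 1/2) * (1-b))) := by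
      push_cast
      field_simp
      ring
    rw [hE]
    have hu0 : (0:ℝ) ≤ t - (R:ℝ) + 1/2 := by linarith
    have hu1 : t - (R:ℝ) + 1/2 ≤ 1 := by linarith
    have hA0 : (0:ℝ) ≤ b + (t - (R:ℝ) + 1/2) * (1-b) := by
      have := mul_nonneg hu0 (by linarith : (0:ℝ) ≤ 1-b)
      linarith
    have hA1 : b + (t - (R:ℝ) + 1/2) * (1-b) ≤ 1 := by
      have := mul_le_mul_of_nonneg_right hu1 (by linarith : (0:ℝ) ≤ 1-b)
      linarith
    have hPA : P * (b + (t - (R:ℝ) + 1/2) * (1-b)) ≤ 1 := by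
      have := mul_le_mul hP1 hA1 hA0 (by norm_num : (0:ℝ) ≤ 1)
      linarith
    exact mul_nonneg (mul_nonneg (by linarith : (0:ℝ) ≤ 1-b) (by linarith : (0:ℝ) ≤ 1+b)) (by linarith : (0:ℝ) ≤ 1 - P * (b + (t - (R:ℝ) + 1/2) * (1-b)))
  · rcases lt_or_ge 0 (t-1) with ht0 | ht0
    · have hrge : 0 ≤ round t := round_nonneg h1
      have hr1 : 1 ≤ round t := by
        by_contra h
        push_neg at h
        have h0 : round t = 0 := by omega
        rw [h0] at htr
        norm_num at htr
        linarith
      unfold tulapCdf0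
      rw [if_neg (by linarith), if_neg (by linarith), hrt1]
      have hA : b ^ (round t) = b ^ (round t - 1) * b := by
        rw [← zpow_add_one₀ hb0.ne']
        congr 1
        ring
      rw [hA]
      apply le_of_eq
      obtain ⟨R, hR⟩ : ∃ R : ℤ, round t = R := ⟨_, rfl⟩
      rw [hR]
      push_cast
      field_simp
      ring
    · have hrge : 0 ≤ round t := round_nonneg h1
      have hrle1 : round t ≤ 1 := by
        by_contra h
        push_neg at h
        have h2 : 2 ≤ round t := by omega
        have : (2:ℝ) ≤ round t := by exact_mod_cast h2
        linarith
      unfold tulapCdf0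
      rw [if_pos ht0, if_neg (by linarith), hrt1]
      have : round t = 0 ∨ round t = 1 := by omega
      rcases this with h' | h'
      · rw [h'] at htl htr ⊢
        norm_num
        rw [← sub_nonneg, ← mul_nonneg_iff_of_pos_right (show (0:ℝ) < b*(1+b) by positivity)]
        have hE : ((1 + b)⁻¹ * (b + (-t + 1 / 2) * (1 - b)) / b + b / (1 + b) * (b + (t + 1 / 2) * (1 - b)) - 1) * (b * (1+b))
            = (-t + 1/2) * (1-b) * (1 - b^2) := by
          field_simp
          ring
        rw [hE]
        have ht' : (0:ℝ) ≤ -t + 1/2 := by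
          have : ((0:ℤ):ℝ) = 0 := by norm_num
          rw [this] at htr
          linarith
        have hb2 : (0:ℝ) ≤ 1 - b^2 := by nlinarith
        have := mul_nonneg (mul_nonneg ht' (by linarith : (0:ℝ) ≤ 1 - b)) hb2
        linarith
      · rw [h'] at htl htr ⊢
        apply le_of_eq
        norm_num
        field_simp
        ring

lemma cdf_neg_nat {b : ℝ} (hb0 : 0 < b) (hb1 : b < 1) (n : ℕ) :
    tulapCdf0 b (-(n:ℝ)) ≤ b ^ n / 2 := by
  have h1b : (0:ℝ) < 1 + b := by linarith
  have hr : round (-(n:ℝ)) = -(n:ℤ) :=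
    round_eq_of (by push_cast; linarith) (by push_cast; linarith)
  have heq : tulapCdf0 b (-(n:ℝ)) = b ^ n / 2 := by
    unfold tulapCdf0
    rw [if_pos (neg_nonpos.mpr (Nat.cast_nonneg n)), hr, neg_neg,
      zpow_natAbs (Int.natCast_nonneg n)]
    simp only [Int.natAbs_natCast]
    push_cast
    field_simp
    ring
  linarith

lemma cdf_pos_nat {b : ℝ} (hb0 : 0 < b) (hb1 : b < 1) (n : ℕ) :
    1 - tulapCdf0 b (n:ℝ) ≤ b ^ n / 2 := by
  have h1b : (0:ℝ) < 1 + b := by linarith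
  cases n with
  | zero =>
    have h0 : tulapCdf0 b 0 = 1/2 := by
      unfold tulapCdf0
      norm_num
      field_simp
      ring
    simp only [Nat.cast_zero, pow_zero]
    rw [h0]
    linarith
  | succ m =>
    have hpos : (0:ℝ) < (m+1:ℕ) := by positivity
    have hr : round ((m+1:ℕ):ℝ) = ((m+1:ℕ):ℤ) :=
      round_eq_of (by push_cast; linarith) (by push_cast; linarith)
    have heq : tulapCdf0 b ((m+1:ℕ):ℝ) = 1 - b ^ (m+1) / 2 := by
      unfold tulapCdf0
      rw [if_neg (by linarith), hr, zpow_natAbs (Int.natCast_nonneg _)]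
      simp only [Int.natAbs_natCast]
      push_cast
      field_simp
      ring
    rw [heq]
    linarith

lemma cdf_zero {b : ℝ} (hb0 : 0 < b) : tulapCdf0 b 0 = 1/2 := by
  unfold tulapCdf0
  norm_num
  have h1b : (0:ℝ) < 1 + b := by linarith
  field_simp
  ring

lemma cdf_ftc {b : ℝ} (hb0 : 0 < b) (hb1 : b < 1) {s t : ℝ} (hst : s ≤ t) :
    ∫ y in s..t, tdens b y = tulapCdf0 b t - tulapCdf0 b s := by
  have hint : IntervalIntegrable (tdens b) volume s t := by
    apply intervalIntegrable_const (c := (1:ℝ)) |>.mono_fun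
      (measurable_tdens.aestronglyMeasurable)
    filter_upwards with y
    rw [Real.norm_eq_abs, norm_one]
    rw [abs_of_nonneg (tdens_nonneg hb0 hb1 y)]
    exact tdens_le_one hb0 hb1 y
  exact intervalIntegral.integral_eq_sub_of_hasDeriv_right_of_le hst
    ((cdf_continuous hb0).continuousOn)
    (fun y _ => (cdf_hasDerivRight hb0 y)) hint

lemma cdf_mono {b : ℝ} (hb0 : 0 < b) (hb1 : b < 1) : Monotone (tulapCdf0 b) := by
  intro s t hst
  have h := cdf_ftc hb0 hb1 hst
  have h2 : 0 ≤ ∫ y in s..t, tdens b y :=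
    intervalIntegral.integral_nonneg hst (fun y _ => tdens_nonneg hb0 hb1 y)
  linarith

section q
variable {b q : ℝ}

lemma tdensity_nonneg (hb0 : 0 < b) (hb1 : b < 1) (hq1 : q < 1) (x : ℝ) :
    0 ≤ tulapDensity b q x := by
  unfold tulapDensity
  split_ifs with h
  · have h1 : (0:ℝ) ≤ (1-b)/(1+b) := by
      apply div_nonneg <;> linarith
    have h2 : (0:ℝ) < 1 - q := by linarith
    positivity
  · exact le_refl 0

lemma tdensity_le (hb0 : 0 < b) (hb1 : b < 1) (hq1 : q < 1) (x : ℝ) :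
    tulapDensity b q x ≤ tdens b x / (1 - q) := by
  unfold tulapDensity tdens
  split_ifs with h
  · exact le_refl _
  · exact div_nonneg (tdens_nonneg hb0 hb1 x) (by linarith)

lemma measurable_tdensity (hb0 : 0 < b) : Measurable (tulapDensity b q) := by
  unfold tulapDensity
  refine Measurable.ite ?_ ?_ measurable_const
  · have : {a : ℝ | q/2 ≤ tulapCdf0 b a ∧ tulapCdf0 b a ≤ 1 - q/2}
        = tulapCdf0 b ⁻¹' (Icc (q/2) (1 - q/2)) := rfl
    rw [this]
    exact (cdf_continuous hb0).measurable measurableSet_Icc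
  · exact ((measurable_from_top
      (f := fun r : ℤ => (1-b)/(1+b) * b ^ r.natAbs / (1-q))).comp measurable_round')

lemma ratio_left (hb0 : 0 < b) (hb1 : b < 1) (hq1 : q < 1) (y : ℝ)
    (h : ¬(tulapCdf0 b (y-1) < q/2 ∧ q/2 ≤ tulapCdf0 b y)) :
    tulapDensity b q y ≤ (1/b) * tulapDensity b q (y-1) := by
  by_cases hc : q/2 ≤ tulapCdf0 b y ∧ tulapCdf0 b y ≤ 1 - q/2
  · have h1 : ¬ (tulapCdf0 b (y-1) < q/2) := fun hcon => h ⟨hcon, hc.1⟩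
    push_neg at h1
    have h2 : tulapCdf0 b (y-1) ≤ 1 - q/2 :=
      le_trans (cdf_mono hb0 hb1 (by linarith : y - 1 ≤ y)) hc.2
    unfold tulapDensity
    rw [if_pos hc, if_pos ⟨h1, h2⟩]
    have hround : round (y-1) = round y - 1 := by
      have := round_sub_intCast y 1
      push_cast at this
      exact_mod_cast this
    rw [hround]
    have hNat : (round y - 1).natAbs ≤ (round y).natAbs + 1 := by omega
    have hpow : b ^ ((round y).natAbs + 1) ≤ b ^ (round y - 1).natAbs :=
      pow_le_pow_of_le_one hb0.le hb1.le hNat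
    rw [pow_succ] at hpow
    have hcb : (0:ℝ) ≤ (1-b)/(1+b) := by
      apply div_nonneg <;> linarith
    have hq' : (0:ℝ) < 1 - q := by linarith
    rw [one_div, ← inv_mul_le_iff₀ (by positivity : (0:ℝ) < b⁻¹)]
    rw [inv_inv, ← mul_div_assoc, div_le_div_iff₀ hq' hq']
    have := mul_le_mul_of_nonneg_left hpow hcb
    nlinarith [this, hq'.le]
  · unfold tulapDensity
    rw [if_neg hc]
    have h2 := tdensity_nonneg hb0 hb1 hq1 (y-1)
    unfold tulapDensity at h2
    positivity

lemma ratio_right (hb0 : 0 < b) (hb1 : b < 1) (hq1 : q < 1) (y : ℝ)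
    (h : ¬(1 - q/2 < tulapCdf0 b (y+1) ∧ tulapCdf0 b y ≤ 1 - q/2)) :
    tulapDensity b q y ≤ (1/b) * tulapDensity b q (y+1) := by
  by_cases hc : q/2 ≤ tulapCdf0 b y ∧ tulapCdf0 b y ≤ 1 - q/2
  · have h1 : ¬ (1 - q/2 < tulapCdf0 b (y+1)) := fun hcon => h ⟨hcon, hc.2⟩
    push_neg at h1
    have h2 : q/2 ≤ tulapCdf0 b (y+1) :=
      le_trans hc.1 (cdf_mono hb0 hb1 (by linarith : y ≤ y + 1))
    unfold tulapDensity
    rw [if_pos hc, if_pos ⟨h2, h1⟩]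
    have hround : round (y+1) = round y + 1 := by
      have := round_add_intCast y 1
      push_cast at this
      exact_mod_cast this
    rw [hround]
    have hNat : (round y + 1).natAbs ≤ (round y).natAbs + 1 := by omega
    have hpow : b ^ ((round y).natAbs + 1) ≤ b ^ (round y + 1).natAbs :=
      pow_le_pow_of_le_one hb0.le hb1.le hNat
    rw [pow_succ] at hpow
    have hcb : (0:ℝ) ≤ (1-b)/(1+b) := by
      apply div_nonneg <;> linarith
    have hq' : (0:ℝ) < 1 - q := by linarith
    rw [one_div, ← inv_mul_le_iff₀ (by positivity : (0:ℝ) < b⁻¹)]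
    rw [inv_inv, ← mul_div_assoc, div_le_div_iff₀ hq' hq']
    have := mul_le_mul_of_nonneg_left hpow hcb
    nlinarith [this, hq'.le]
  · unfold tulapDensity
    rw [if_neg hc]
    have h2 := tdensity_nonneg hb0 hb1 hq1 (y+1)
    unfold tulapDensity at h2
    positivity

lemma mass_le (hb0 : 0 < b) (hb1 : b < 1) (hq1 : q < 1) (t : ℝ) :
    ∫⁻ y in Icc t (t+1), ENNReal.ofReal (tulapDensity b q y)
      ≤ ENNReal.ofReal ((tulapCdf0 b (t+1) - tulapCdf0 b t) / (1 - q)) := by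
  have hq' : (0:ℝ) < 1 - q := by linarith
  have hIcc : IntegrableOn (fun y => tdens b y / (1-q)) (Icc t (t+1)) volume := by
    rw [integrableOn_Icc_iff_integrableOn_Ioc]
    have h1 : IntervalIntegrable (tdens b) volume t (t+1) := by
      apply intervalIntegrable_const (c := (1:ℝ)) |>.mono_fun
        (measurable_tdens.aestronglyMeasurable)
      filter_upwards with y
      rw [Real.norm_eq_abs, norm_one, abs_of_nonneg (tdens_nonneg hb0 hb1 y)]
      exact tdens_le_one hb0 hb1 y
    have h2 := (intervalIntegrable_iff.mp h1)
    rw [uIoc_of_le (by linarith : t ≤ t + 1)] at h2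
    exact h2.div_const _
  calc ∫⁻ y in Icc t (t+1), ENNReal.ofReal (tulapDensity b q y)
      ≤ ∫⁻ y in Icc t (t+1), ENNReal.ofReal (tdens b y / (1-q)) := by
        apply lintegral_mono
        intro y
        exact ENNReal.ofReal_le_ofReal (tdensity_le hb0 hb1 hq1 y)
    _ = ENNReal.ofReal (∫ y in Icc t (t+1), tdens b y / (1-q)) := by
        rw [ofReal_integral_eq_lintegral_ofReal hIcc]
        filter_upwards with y
        exact div_nonneg (tdens_nonneg hb0 hb1 y) hq'.le
    _ = ENNReal.ofReal ((tulapCdf0 b (t+1) - tulapCdf0 b t) / (1 - q)) := by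
        congr 1
        rw [integral_div, integral_Icc_eq_integral_Ioc,
          ← intervalIntegral.integral_of_le (by linarith : t ≤ t + 1),
          cdf_ftc hb0 hb1 (by linarith : t ≤ t + 1)]

lemma bad_left (hb0 : 0 < b) (hb1 : b < 1) (hq0 : 0 < q) (hq1 : q < 1) :
    ∃ t : ℝ, (∀ y, tulapCdf0 b (y-1) < q/2 → q/2 ≤ tulapCdf0 b y → y ∈ Icc t (t+1)) ∧
      tulapCdf0 b t ≤ q/2 := by
  set S := {y : ℝ | tulapCdf0 b y < q/2} with hS
  have hne : S.Nonempty := by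
    obtain ⟨m, hm⟩ := exists_pow_lt_of_lt_one hq0 hb1
    refine ⟨-(m:ℝ), ?_⟩
    have := cdf_neg_nat hb0 hb1 m
    simp only [hS, mem_setOf_eq]
    linarith
  have hbdd : BddAbove S := by
    refine ⟨0, fun y hy => ?_⟩
    by_contra hy0
    push_neg at hy0
    have h1 : tulapCdf0 b 0 ≤ tulapCdf0 b y := cdf_mono hb0 hb1 hy0.le
    rw [cdf_zero hb0] at h1
    simp only [hS, mem_setOf_eq] at hy
    linarith
  refine ⟨sSup S, fun y h1 h2 => ?_, ?_⟩
  · constructor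
    · by_contra hlt
      push_neg at hlt
      obtain ⟨s, hsS, hys⟩ := exists_lt_of_lt_csSup hne hlt
      have := cdf_mono hb0 hb1 hys.le
      simp only [hS, mem_setOf_eq] at hsS
      linarith
    · have : y - 1 ∈ S := h1
      have := le_csSup hbdd this
      linarith
  · by_contra hgt
    push_neg at hgt
    have hev : ∀ᶠ y in nhds (sSup S), q/2 < tulapCdf0 b y :=
      ((cdf_continuous hb0).continuousAt).eventually (eventually_gt_nhds hgt)
    obtain ⟨η, hη, hball⟩ := Metric.eventually_nhds_iff.mp hev
    have hup : ∀ s ∈ S, s ≤ sSup S - η/2 := by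
      intro s hs
      have hle : s ≤ sSup S := le_csSup hbdd hs
      by_contra hc
      push_neg at hc
      have : dist s (sSup S) < η := by
        rw [Real.dist_eq, abs_of_nonpos (by linarith)]
        linarith
      have := hball this
      simp only [hS, mem_setOf_eq] at hs
      linarith
    have := csSup_le hne hup
    linarith

lemma bad_right (hb0 : 0 < b) (hb1 : b < 1) (hq0 : 0 < q) (hq1 : q < 1) :
    ∃ t : ℝ, (∀ y, 1 - q/2 < tulapCdf0 b (y+1) → tulapCdf0 b y ≤ 1 - q/2 →
        y ∈ Icc (t-1) t) ∧ 1 - q/2 ≤ tulapCdf0 b t := by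
  set S := {y : ℝ | 1 - q/2 < tulapCdf0 b y} with hS
  have hne : S.Nonempty := by
    obtain ⟨m, hm⟩ := exists_pow_lt_of_lt_one hq0 hb1
    refine ⟨(m:ℝ), ?_⟩
    have := cdf_pos_nat hb0 hb1 m
    simp only [hS, mem_setOf_eq]
    linarith
  have hbdd : BddBelow S := by
    refine ⟨0, fun y hy => ?_⟩
    by_contra hy0
    push_neg at hy0
    have h1 : tulapCdf0 b y ≤ tulapCdf0 b 0 := cdf_mono hb0 hb1 hy0.le
    rw [cdf_zero hb0] at h1
    simp only [hS, mem_setOf_eq] at hy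
    linarith
  refine ⟨sInf S, fun y h1 h2 => ?_, ?_⟩
  · constructor
    · have : y + 1 ∈ S := h1
      have := csInf_le hbdd this
      linarith
    · by_contra hlt
      push_neg at hlt
      obtain ⟨s, hsS, hys⟩ := exists_lt_of_csInf_lt hne hlt
      have := cdf_mono hb0 hb1 hys.le
      simp only [hS, mem_setOf_eq] at hsS
      linarith
  · by_contra hgt
    push_neg at hgt
    have hev : ∀ᶠ y in nhds (sInf S), tulapCdf0 b y < 1 - q/2 :=
      ((cdf_continuous hb0).continuousAt).eventually (eventually_lt_nhds hgt)
    obtain ⟨η, hη, hball⟩ := Metric.eventually_nhds_iff.mp hev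
    have hup : ∀ s ∈ S, sInf S + η/2 ≤ s := by
      intro s hs
      have hle : sInf S ≤ s := csInf_le hbdd hs
      by_contra hc
      push_neg at hc
      have : dist s (sInf S) < η := by
        rw [Real.dist_eq, abs_of_nonneg (by linarith)]
        linarith
      have := hball this
      simp only [hS, mem_setOf_eq] at hs
      linarith
    have := le_csInf hne hup
    linarith

end q

section core
variable {b q δ : ℝ}

/-- generic decomposition step -/
lemma core_split (hb0 : 0 < b) (hb1 : b < 1) (hq1 : q < 1) (hδ : 0 ≤ δ)
    (G : ℝ → ℝ) (hG : Measurable G) (hG0 : ∀ y, 0 ≤ G y)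
    (Bad : Set ℝ)
    (hpt : ∀ y ∉ Bad, tulapDensity b q y ≤ (1/b) * G y)
    (hmass : ∫⁻ y in Bad, ENNReal.ofReal (tulapDensity b q y) ≤ ENNReal.ofReal δ)
    (A : Set ℝ) :
    ∫⁻ x in A, ENNReal.ofReal (tulapDensity b q x)
      ≤ (ENNReal.ofReal (1/b) * ∫⁻ x in A, ENNReal.ofReal (G x)) + ENNReal.ofReal δ := by
  have hsub : A ⊆ (A \ Bad) ∪ Bad := by
    intro x hx
    by_cases hxB : x ∈ Bad
    · exact Or.inr hxB
    · exact Or.inl ⟨hx, hxB⟩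
  calc ∫⁻ x in A, ENNReal.ofReal (tulapDensity b q x)
      ≤ ∫⁻ x in (A \ Bad) ∪ Bad, ENNReal.ofReal (tulapDensity b q x) :=
        lintegral_mono_set hsub
    _ ≤ (∫⁻ x in A \ Bad, ENNReal.ofReal (tulapDensity b q x))
        + ∫⁻ x in Bad, ENNReal.ofReal (tulapDensity b q x) :=
        lintegral_union_le _ _ _
    _ ≤ (∫⁻ x in A \ Bad, ENNReal.ofReal ((1/b) * G x)) + ENNReal.ofReal δ := by
        apply add_le_add ?_ hmass
        apply setLIntegral_mono
        · exact (ENNReal.measurable_ofReal.comp (hG.const_mul _))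
        · intro x hx
          exact ENNReal.ofReal_le_ofReal (hpt x hx.2)
    _ = ENNReal.ofReal (1/b) * (∫⁻ x in A \ Bad, ENNReal.ofReal (G x)) + ENNReal.ofReal δ := by
        congr 1
        have : ∀ x, ENNReal.ofReal ((1/b) * G x)
            = ENNReal.ofReal (1/b) * ENNReal.ofReal (G x) := fun x =>
          ENNReal.ofReal_mul (by positivity)
        simp_rw [this]
        exact lintegral_const_mul' _ _ ENNReal.ofReal_ne_top
    _ ≤ ENNReal.ofReal (1/b) * (∫⁻ x in A, ENNReal.ofReal (G x)) + ENNReal.ofReal δ := by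
        gcongr
        exact diff_subset

lemma arith_bound (hb0 : 0 < b) (hb1 : b < 1) (hq1 : q < 1) (hδ : 0 ≤ δ)
    (hδq : q * (1 - b) = 2 * δ * b * (1 - q))
    {F1 F0' : ℝ} (hrec : F1 * b ≤ F0') (hF0 : F0' ≤ q/2) :
    (F1 - F0') / (1 - q) ≤ δ := by
  have hq' : (0:ℝ) < 1 - q := by linarith
  rw [div_le_iff₀ hq']
  nlinarith [mul_le_mul_of_nonneg_right hF0 (by linarith : (0:ℝ) ≤ 1 - b)]

lemma core_left (hb0 : 0 < b) (hb1 : b < 1) (hq0 : 0 ≤ q) (hq1 : q < 1) (hδ : 0 ≤ δ)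
    (hδq : q * (1 - b) = 2 * δ * b * (1 - q)) (A : Set ℝ) :
    ∫⁻ x in A, ENNReal.ofReal (tulapDensity b q x)
      ≤ (ENNReal.ofReal (1/b) * ∫⁻ x in A, ENNReal.ofReal (tulapDensity b q (x - 1)))
        + ENNReal.ofReal δ := by
  rcases eq_or_lt_of_le hq0 with hq0' | hq0'
  · -- q = 0 : no bad set
    apply core_split hb0 hb1 hq1 hδ _ ((measurable_tdensity hb0).comp (measurable_sub_const 1))
      (fun y => tdensity_nonneg hb0 hb1 hq1 _) ∅ ?_ (by simp)
    intro y _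
    apply ratio_left hb0 hb1 hq1
    rintro ⟨hcon, -⟩
    rw [← hq0'] at hcon
    norm_num at hcon
    exact absurd hcon (not_lt.mpr (cdf_pos hb0 hb1 _).le)
  · obtain ⟨t, hcover, ht⟩ := bad_left hb0 hb1 hq0' hq1
    apply core_split hb0 hb1 hq1 hδ _ ((measurable_tdensity hb0).comp (measurable_sub_const 1))
      (fun y => tdensity_nonneg hb0 hb1 hq1 _) (Icc t (t+1)) ?_ ?_
    · intro y hy
      apply ratio_left hb0 hb1 hq1
      rintro ⟨h1, h2⟩
      exact hy (hcover y h1 h2)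
    · refine le_trans (mass_le hb0 hb1 hq1 t) (ENNReal.ofReal_le_ofReal ?_)
      have hrec := cdf_rec_left hb0 hb1 t
      rw [le_div_iff₀ hb0] at hrec
      exact arith_bound hb0 hb1 hq1 hδ hδq hrec ht

lemma core_right (hb0 : 0 < b) (hb1 : b < 1) (hq0 : 0 ≤ q) (hq1 : q < 1) (hδ : 0 ≤ δ)
    (hδq : q * (1 - b) = 2 * δ * b * (1 - q)) (A : Set ℝ) :
    ∫⁻ x in A, ENNReal.ofReal (tulapDensity b q x)
      ≤ (ENNReal.ofReal (1/b) * ∫⁻ x in A, ENNReal.ofReal (tulapDensity b q (x + 1)))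
        + ENNReal.ofReal δ := by
  rcases eq_or_lt_of_le hq0 with hq0' | hq0'
  · apply core_split hb0 hb1 hq1 hδ _ ((measurable_tdensity hb0).comp (measurable_add_const 1))
      (fun y => tdensity_nonneg hb0 hb1 hq1 _) ∅ ?_ (by simp)
    intro y _
    apply ratio_right hb0 hb1 hq1
    rintro ⟨hcon, -⟩
    rw [← hq0'] at hcon
    norm_num at hcon
    exact absurd hcon (not_lt.mpr (cdf_lt_one hb0 hb1 _).le)
  · obtain ⟨t, hcover, ht⟩ := bad_right hb0 hb1 hq0' hq1
    apply core_split hb0 hb1 hq1 hδ _ ((measurable_tdensity hb0).comp (measurable_add_const 1))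
      (fun y => tdensity_nonneg hb0 hb1 hq1 _) (Icc (t-1) t) ?_ ?_
    · intro y hy
      apply ratio_right hb0 hb1 hq1
      rintro ⟨h1, h2⟩
      exact hy (hcover y h1 h2)
    · have h1 : Icc (t-1) t = Icc (t-1) ((t-1)+1) := by norm_num
      rw [h1]
      refine le_trans (mass_le hb0 hb1 hq1 (t-1)) (ENNReal.ofReal_le_ofReal ?_)
      have hrec := cdf_rec_right hb0 hb1 t
      rw [le_div_iff₀ hb0] at hrec
      have h2 : (t - 1) + 1 = t := by ring
      rw [h2]
      have harith := arith_bound hb0 hb1 hq1 hδ hδq (F1 := 1 - tulapCdf0 b (t-1))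
        (F0' := 1 - tulapCdf0 b t) hrec (by linarith)
      have h3 : (1 - tulapCdf0 b (t-1)) - (1 - tulapCdf0 b t)
          = tulapCdf0 b t - tulapCdf0 b (t-1) := by ring
      rw [h3] at harith
      exact harith

lemma lint_shift (g : ℝ → ENNReal) (A : Set ℝ) (hA : MeasurableSet A) (c : ℝ) :
    ∫⁻ x in A, g (x - c) = ∫⁻ y in (fun y => y + c) ⁻¹' A, g y := by
  have hA' : MeasurableSet ((fun y => y + c) ⁻¹' A) := hA.preimage (measurable_add_const c)
  rw [← lintegral_indicator hA, ← lintegral_indicator hA']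
  have hfun : ∀ x, A.indicator (fun x => g (x - c)) x
      = ((fun y => y + c) ⁻¹' A).indicator g (x + (-c)) := by
    intro x
    by_cases hx : x ∈ A
    · rw [indicator_of_mem hx, indicator_of_mem]
      · norm_num [sub_eq_add_neg]
      · simp only [mem_preimage]
        have : x + (-c) + c = x := by ring
        rw [this]
        exact hx
    · rw [indicator_of_notMem hx, indicator_of_notMem]
      simp only [mem_preimage]
      have : x + (-c) + c = x := by ring
      rw [this]
      exact hx
  simp_rw [hfun]
  exact lintegral_add_right_eq_self (((fun y => y + c) ⁻¹' A).indicator g) (-c)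

end core
end TulapAux

theorem tulap_mechanism_dp {𝒳 : Type*} [DecidableEq 𝒳] {n : ℕ} (ε δ : ℝ)
    (hε : 0 < ε) (hδ : 0 ≤ δ) (b q : ℝ) (hb : b = Real.exp (-ε))
    (hq : q = 2 * δ * b / (1 - b + 2 * δ * b))
    (T : (Fin n → 𝒳) → ℤ)
    (hsens : ∀ X X' : Fin n → 𝒳, hammingDist X X' = 1 → |T X - T X'| ≤ 1) :
    ∀ X X' : Fin n → 𝒳, hammingDist X X' = 1 → ∀ B : Set ℝ, MeasurableSet B →
      tulapMeasure (T X : ℝ) b q B ≤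
        ENNReal.ofReal (Real.exp ε) * tulapMeasure (T X' : ℝ) b q B + ENNReal.ofReal δ := by
  intro X X' hH B hB
  have hb0 : 0 < b := hb ▸ Real.exp_pos _
  have hb1 : b < 1 := by
    rw [hb]
    exact Real.exp_lt_one_iff.mpr (by linarith)
  have hD : (0:ℝ) < 1 - b + 2 * δ * b := by nlinarith
  have hq0 : 0 ≤ q := by
    rw [hq]
    positivity
  have hq1 : q < 1 := by
    rw [hq, div_lt_one hD]
    linarith
  have hδq : q * (1 - b) = 2 * δ * b * (1 - q) := by
    have h1 : q * (1 - b + 2 * δ * b) = 2 * δ * b := by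
      rw [hq, div_mul_cancel₀ _ hD.ne']
    nlinarith [h1]
  have hexp : Real.exp ε = 1/b := by
    rw [hb, Real.exp_neg, one_div, inv_inv]
  -- reduce to integrals over shifted sets
  set m : ℝ := (T X : ℝ) with hm
  set m' : ℝ := (T X' : ℝ) with hm'
  set s : ℝ := m' - m with hs
  have hBm : MeasurableSet ((fun y => y + m) ⁻¹' B) := hB.preimage (measurable_add_const m)
  have hμ1 : tulapMeasure m b q B
      = ∫⁻ y in (fun y => y + m) ⁻¹' B, ENNReal.ofReal (tulapDensity b q y) := by
    rw [tulapMeasure, withDensity_apply _ hB]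
    exact TulapAux.lint_shift (fun x => ENNReal.ofReal (tulapDensity b q x)) B hB m
  have hμ2 : tulapMeasure m' b q B
      = ∫⁻ x in (fun y => y + m) ⁻¹' B, ENNReal.ofReal (tulapDensity b q (x - s)) := by
    rw [tulapMeasure, withDensity_apply _ hB]
    rw [TulapAux.lint_shift (fun x => ENNReal.ofReal (tulapDensity b q x)) B hB m',
      TulapAux.lint_shift (fun x => ENNReal.ofReal (tulapDensity b q x)) _ hBm s]
    have hsets : (fun y => y + s) ⁻¹' ((fun y => y + m) ⁻¹' B) = (fun y => y + m') ⁻¹' B := by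
      ext y
      simp only [mem_preimage]
      rw [show y + s + m = y + m' by rw [hs]; ring]
    rw [hsets]
  rw [hμ1, hμ2, hexp]
  -- case on the shift
  have hd : |T X' - T X| ≤ 1 := by
    rw [abs_sub_comm]
    exact hsens X X' hH
  have hdc : T X' - T X = -1 ∨ T X' - T X = 0 ∨ T X' - T X = 1 := by
    have := abs_le.mp hd
    omega
  have hsval : s = ((T X' - T X : ℤ) : ℝ) := by
    rw [hs, hm, hm']
    push_cast
    ring
  rcases hdc with h | h | h
  · have : s = -1 := by rw [hsval, h]; norm_num
    rw [this]
    simp_rw [sub_neg_eq_add]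
    exact TulapAux.core_right hb0 hb1 hq0 hq1 hδ hδq _
  · have : s = 0 := by rw [hsval, h]; norm_num
    rw [this]
    simp_rw [sub_zero]
    have h1 : (1:ENNReal) ≤ ENNReal.ofReal (1/b) := by
      rw [ENNReal.one_le_ofReal]
      exact one_le_one_div hb0 hb1.le
    calc ∫⁻ y in (fun y => y + m) ⁻¹' B, ENNReal.ofReal (tulapDensity b q y)
        = 1 * ∫⁻ y in (fun y => y + m) ⁻¹' B, ENNReal.ofReal (tulapDensity b q y) := by
          rw [one_mul]
      _ ≤ ENNReal.ofReal (1/b) * ∫⁻ y in (fun y => y + m) ⁻¹' B,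
            ENNReal.ofReal (tulapDensity b q y) := mul_le_mul_left h1 _
      _ ≤ _ := self_le_add_right _ _
  · have : s = 1 := by rw [hsval, h]; norm_num
    rw [this]
    exact TulapAux.core_left hb0 hb1 hq0 hq1 hδ hδq _
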